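/- The set S_d of d × d Spearman's rho matrices is convex: if R₁ and R₂ are Spearman's rho matrices and t ∈ [0,1], then tR₁ + (1-t)R₂ is a Spearman's rho matrix. -/

import Mathlib

open MeasureTheory
open scoped Matrix

section SpearmanAux

open MeasureTheory ProbabilityTheory Set Filter Function

/-- The uniform measure on [0,1]. -/
noncomputable def unifM : Measure ℝ := volume.restrict (Set.Icc 0 1)

instance : IsProbabilityMeasure unifM :=
  ⟨by simp [unifM, Measure.restrict_apply, Real.volume_Icc]⟩

lemma unifM_atomless (x : ℝ) : unifM {x} = 0 :=
  le_antisymm (le_trans (Measure.restrict_le_self _) (by simp)) bot_le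

lemma cdf_unifM {u : ℝ} (hu : u ∈ Set.Icc (0:ℝ) 1) : cdf unifM u = u := by
  rw [cdf_eq_real, measureReal_def, unifM, Measure.restrict_apply measurableSet_Iic]
  have : Set.Iic u ∩ Set.Icc 0 1 = Set.Icc 0 u := by
    ext x
    simp only [Set.mem_inter_iff, Set.mem_Iic, Set.mem_Icc]
    constructor
    · rintro ⟨h1, h2, h3⟩; exact ⟨h2, h1⟩
    · rintro ⟨h1, h2⟩; exact ⟨h2, h1, h2.trans hu.2⟩
  rw [this, Real.volume_Icc, sub_zero, ENNReal.toReal_ofReal hu.1]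

lemma cdf_continuous_of_atomless (ν : Measure ℝ) [IsProbabilityMeasure ν]
    (h : ∀ x, ν {x} = 0) (x : ℝ) : leftLim (cdf ν) x = cdf ν x := by
  have h1 : (cdf ν).measure {x} = 0 := by rw [measure_cdf]; exact h x
  rw [StieltjesFunction.measure_singleton] at h1
  have h2 : cdf ν x - leftLim (cdf ν) x ≤ 0 := by
    by_contra hc
    push_neg at hc
    rw [ENNReal.ofReal_eq_zero] at h1
    linarith
  have h3 := (monotone_cdf ν).leftLim_le (le_refl x)
  linarith

/-- Probability integral transform. -/
lemma pit (ν : Measure ℝ) [IsProbabilityMeasure ν] (h : ∀ x, ν {x} = 0) :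
    ν.map (cdf ν) = unifM := by
  have hmeas : Measurable (cdf ν) := (monotone_cdf ν).measurable
  have : IsProbabilityMeasure (ν.map (cdf ν)) :=
    Measure.isProbabilityMeasure_map hmeas.aemeasurable
  refine Measure.ext_of_Iic _ _ (fun u => ?_)
  rw [Measure.map_apply hmeas measurableSet_Iic]
  have hRHS : unifM (Set.Iic u) = ENNReal.ofReal (min u 1) := by
    rw [unifM, Measure.restrict_apply measurableSet_Iic]
    have : Set.Iic u ∩ Set.Icc 0 1 = Set.Icc 0 (min u 1) := by
      ext x
      simp only [Set.mem_inter_iff, Set.mem_Iic, Set.mem_Icc, le_min_iff]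
      constructor
      · rintro ⟨h1, h2, h3⟩; exact ⟨h2, h1, h3⟩
      · rintro ⟨h1, h2, h3⟩; exact ⟨h2, h1, h3⟩
    rw [this, Real.volume_Icc, sub_zero]
  rw [hRHS]
  rcases le_or_gt 1 u with hu | hu
  · have : cdf ν ⁻¹' Set.Iic u = Set.univ := by
      ext x; simp [Set.mem_preimage, Set.mem_Iic, (cdf_le_one ν x).trans hu]
    rw [this, min_eq_right hu]
    simp
  · rw [min_eq_left hu.le]
    set S := cdf ν ⁻¹' Set.Iic u with hS
    rcases eq_empty_or_nonempty S with hSe | hSne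
    · rw [hSe]
      have hu0 : u ≤ 0 := by
        by_contra hc
        push_neg at hc
        obtain ⟨x, hx⟩ : ∃ x, cdf ν x < u :=
          ((tendsto_cdf_atBot ν).eventually (eventually_lt_nhds hc)).exists
        have hxS : x ∈ S := by
          simp only [hS, Set.mem_preimage, Set.mem_Iic]; exact hx.le
        rw [hSe] at hxS
        exact hxS.elim
      simp [ENNReal.ofReal_eq_zero.mpr hu0]
    · -- S nonempty
      have hbdd : BddAbove S := by
        obtain ⟨x₀, hx₀⟩ : ∃ x₀, u < cdf ν x₀ := by
          have := tendsto_cdf_atTop ν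
          exact (this.eventually (eventually_gt_nhds hu)).exists
        refine ⟨x₀, fun x hx => ?_⟩
        simp only [hS, Set.mem_preimage, Set.mem_Iic] at hx
        by_contra hc
        push_neg at hc
        have := (monotone_cdf ν) hc.le
        linarith
      set a := sSup S with ha
      have hlt : ∀ x < a, cdf ν x ≤ u := by
        intro x hx
        obtain ⟨s, hs, hxs⟩ := (lt_csSup_iff hbdd hSne).mp hx
        exact le_trans ((monotone_cdf ν) hxs.le) hs
      have hle : cdf ν a ≤ u := by
        rw [← cdf_continuous_of_atomless ν h a]
        refine le_of_tendsto ((monotone_cdf ν).tendsto_leftLim a) ?_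
        filter_upwards [self_mem_nhdsWithin] with x hx
        exact hlt x hx
      have hge : u ≤ cdf ν a := by
        have hrt : Filter.Tendsto (cdf ν) (nhdsWithin a (Set.Ioi a)) (nhds (cdf ν a)) :=
          Filter.Tendsto.mono_left ((cdf ν).right_continuous a) (nhdsWithin_mono a Set.Ioi_subset_Ici_self)
        refine ge_of_tendsto hrt ?_
        filter_upwards [self_mem_nhdsWithin] with x hx
        by_contra hc
        push_neg at hc
        have hxS : x ∈ S := by
          simp only [hS, Set.mem_preimage, Set.mem_Iic]; exact hc.le
        have : x ≤ a := le_csSup hbdd hxS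
        exact absurd hx (not_lt.mpr this)
      have hSa : S = Set.Iic a := by
        ext x
        simp only [hS, Set.mem_preimage, Set.mem_Iic]
        constructor
        · intro hx; exact le_csSup hbdd hx
        · intro hx; exact le_trans ((monotone_cdf ν) hx) hle
      rw [hSa, ← ofReal_cdf, le_antisymm hle hge]

end SpearmanAux

/-- `R` is a Spearman's rho matrix if there is a random vector `X` with continuous
marginal distributions whose matrix of pairwise Spearman rank correlations
`12 * E[F_i(X_i) F_j(X_j)] - 3` is `R`, where `F_i` is the cdf of `X_i`. -/
def IsSpearmanMatrix {d : ℕ} (R : Matrix (Fin d) (Fin d) ℝ) : Prop :=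
  ∃ (Ω : Type) (_ : MeasurableSpace Ω) (μ : Measure Ω) (_ : IsProbabilityMeasure μ)
    (X : Ω → Fin d → ℝ),
    (∀ i, Measurable fun ω => X ω i) ∧
    (∀ i (x : ℝ), Measure.map (fun ω => X ω i) μ {x} = 0) ∧
    ∀ i j, R i j =
      12 * (∫ ω, ProbabilityTheory.cdf (Measure.map (fun ω' => X ω' i) μ) (X ω i) *
        ProbabilityTheory.cdf (Measure.map (fun ω' => X ω' j) μ) (X ω j) ∂μ) - 3

/-- The set of d × d Spearman's rho matrices is convex. -/
theorem spearman_convex {d : ℕ} (R₁ R₂ : Matrix (Fin d) (Fin d) ℝ)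
    (h₁ : IsSpearmanMatrix R₁) (h₂ : IsSpearmanMatrix R₂)
    (t : ℝ) (ht : t ∈ Set.Icc (0 : ℝ) 1) :
    IsSpearmanMatrix (t • R₁ + (1 - t) • R₂) := by
  classical
  obtain ⟨Ω₁, m₁, μ₁, hp₁, X₁, hX₁, ha₁, hR₁⟩ := h₁
  obtain ⟨Ω₂, m₂, μ₂, hp₂, X₂, hX₂, ha₂, hR₂⟩ := h₂
  obtain ⟨ht0, ht1⟩ := ht
  have ht1' : (0:ℝ) ≤ 1 - t := by linarith
  haveI := hp₁; haveI := hp₂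
  haveI hpν₁ : ∀ i, IsProbabilityMeasure (μ₁.map (fun ω => X₁ ω i)) :=
    fun i => Measure.isProbabilityMeasure_map (hX₁ i).aemeasurable
  haveI hpν₂ : ∀ i, IsProbabilityMeasure (μ₂.map (fun ω => X₂ ω i)) :=
    fun i => Measure.isProbabilityMeasure_map (hX₂ i).aemeasurable
  set U₁ : Ω₁ → Fin d → ℝ :=
    fun ω i => ProbabilityTheory.cdf (μ₁.map (fun ω' => X₁ ω' i)) (X₁ ω i) with hU₁
  set U₂ : Ω₂ → Fin d → ℝ :=
    fun ω i => ProbabilityTheory.cdf (μ₂.map (fun ω' => X₂ ω' i)) (X₂ ω i) with hU₂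
  have hU₁m : ∀ i, Measurable (fun ω => U₁ ω i) :=
    fun i => ((ProbabilityTheory.monotone_cdf _).measurable).comp (hX₁ i)
  have hU₂m : ∀ i, Measurable (fun ω => U₂ ω i) :=
    fun i => ((ProbabilityTheory.monotone_cdf _).measurable).comp (hX₂ i)
  set μ : Measure (Ω₁ ⊕ Ω₂) :=
    ENNReal.ofReal t • μ₁.map Sum.inl + ENNReal.ofReal (1 - t) • μ₂.map Sum.inr with hμ
  have hofsum : ENNReal.ofReal t + ENNReal.ofReal (1 - t) = 1 := by
    rw [← ENNReal.ofReal_add ht0 ht1']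
    norm_num
  haveI hpmapl : IsProbabilityMeasure (μ₁.map (Sum.inl : Ω₁ → Ω₁ ⊕ Ω₂)) :=
    Measure.isProbabilityMeasure_map measurable_inl.aemeasurable
  haveI hpmapr : IsProbabilityMeasure (μ₂.map (Sum.inr : Ω₂ → Ω₁ ⊕ Ω₂)) :=
    Measure.isProbabilityMeasure_map measurable_inr.aemeasurable
  haveI hpμ : IsProbabilityMeasure μ := by
    constructor
    simp only [hμ, Measure.add_apply, Measure.smul_apply, smul_eq_mul, measure_univ,
      mul_one]
    exact hofsum
  have helim : ∀ i : Fin d, (fun ω => Sum.elim U₁ U₂ ω i)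
      = Sum.elim (fun ω => U₁ ω i) (fun ω => U₂ ω i) := by
    intro i; funext ω; cases ω <;> rfl
  have hXm : ∀ i, Measurable (fun ω => Sum.elim U₁ U₂ ω i) := by
    intro i; rw [helim i]; exact (hU₁m i).sumElim (hU₂m i)
  have hmarg : ∀ i, μ.map (fun ω => Sum.elim U₁ U₂ ω i) = unifM := by
    intro i
    rw [helim i]
    have hm : Measurable (Sum.elim (fun ω => U₁ ω i) (fun ω => U₂ ω i)) :=
      (hU₁m i).sumElim (hU₂m i)
    rw [hμ, Measure.map_add _ _ hm, Measure.map_smul, Measure.map_smul,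
      Measure.map_map hm measurable_inl, Measure.map_map hm measurable_inr]
    have c1 : Sum.elim (fun ω => U₁ ω i) (fun ω => U₂ ω i) ∘ Sum.inl
        = fun ω => U₁ ω i := rfl
    have c2 : Sum.elim (fun ω => U₁ ω i) (fun ω => U₂ ω i) ∘ Sum.inr
        = fun ω => U₂ ω i := rfl
    have p1 : μ₁.map (fun ω => U₁ ω i) = unifM := by
      have he : (fun ω => U₁ ω i)
          = (ProbabilityTheory.cdf (μ₁.map (fun ω' => X₁ ω' i))) ∘ (fun ω => X₁ ω i) := rfl
      rw [he, ← Measure.map_map (ProbabilityTheory.monotone_cdf _).measurable (hX₁ i)]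
      exact pit _ (ha₁ i)
    have p2 : μ₂.map (fun ω => U₂ ω i) = unifM := by
      have he : (fun ω => U₂ ω i)
          = (ProbabilityTheory.cdf (μ₂.map (fun ω' => X₂ ω' i))) ∘ (fun ω => X₂ ω i) := rfl
      rw [he, ← Measure.map_map (ProbabilityTheory.monotone_cdf _).measurable (hX₂ i)]
      exact pit _ (ha₂ i)
    rw [c1, c2, p1, p2, ← add_smul, hofsum, one_smul]
  refine ⟨Ω₁ ⊕ Ω₂, inferInstance, μ, hpμ, Sum.elim U₁ U₂, hXm, ?_, ?_⟩
  · intro i x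
    rw [hmarg i]
    exact unifM_atomless x
  · intro i j
    have hmem : ∀ (ω : Ω₁ ⊕ Ω₂) (k : Fin d), Sum.elim U₁ U₂ ω k ∈ Set.Icc (0:ℝ) 1 := by
      intro ω k
      cases ω <;>
        exact ⟨ProbabilityTheory.cdf_nonneg _ _, ProbabilityTheory.cdf_le_one _ _⟩
    have hI : (∫ ω, ProbabilityTheory.cdf (Measure.map (fun ω' => Sum.elim U₁ U₂ ω' i) μ)
          (Sum.elim U₁ U₂ ω i) *
          ProbabilityTheory.cdf (Measure.map (fun ω' => Sum.elim U₁ U₂ ω' j) μ)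
          (Sum.elim U₁ U₂ ω j) ∂μ)
        = t * (∫ ω, U₁ ω i * U₁ ω j ∂μ₁) + (1 - t) * (∫ ω, U₂ ω i * U₂ ω j ∂μ₂) := by
      rw [hmarg i, hmarg j]
      have heq : (fun ω => ProbabilityTheory.cdf unifM (Sum.elim U₁ U₂ ω i) *
          ProbabilityTheory.cdf unifM (Sum.elim U₁ U₂ ω j))
          = fun ω => Sum.elim U₁ U₂ ω i * Sum.elim U₁ U₂ ω j := by
        funext ω
        rw [cdf_unifM (hmem ω i), cdf_unifM (hmem ω j)]
      rw [heq]
      set g : (Ω₁ ⊕ Ω₂) → ℝ := fun ω => Sum.elim U₁ U₂ ω i * Sum.elim U₁ U₂ ω j with hg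
      have hgm : Measurable g := (hXm i).mul (hXm j)
      have hgb : ∀ ω, ‖g ω‖ ≤ 1 := by
        intro ω
        rw [hg, Real.norm_eq_abs, abs_mul]
        have h1 := hmem ω i; have h2 := hmem ω j
        rw [abs_of_nonneg h1.1, abs_of_nonneg h2.1]
        calc Sum.elim U₁ U₂ ω i * Sum.elim U₁ U₂ ω j ≤ 1 * 1 :=
              mul_le_mul h1.2 h2.2 h2.1 zero_le_one
          _ = 1 := one_mul 1
      have hint1 : Integrable g (μ₁.map (Sum.inl : Ω₁ → Ω₁ ⊕ Ω₂)) :=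
        (integrable_const 1).mono' hgm.aestronglyMeasurable (ae_of_all _ hgb)
      have hint2 : Integrable g (μ₂.map (Sum.inr : Ω₂ → Ω₁ ⊕ Ω₂)) :=
        (integrable_const 1).mono' hgm.aestronglyMeasurable (ae_of_all _ hgb)
      rw [hμ, integral_add_measure (hint1.smul_measure ENNReal.ofReal_ne_top)
        (hint2.smul_measure ENNReal.ofReal_ne_top),
        integral_smul_measure, integral_smul_measure,
        ENNReal.toReal_ofReal ht0, ENNReal.toReal_ofReal ht1',
        integral_map measurable_inl.aemeasurable hgm.aestronglyMeasurable,
        integral_map measurable_inr.aemeasurable hgm.aestronglyMeasurable]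
      rfl
    rw [hI, Matrix.add_apply, Matrix.smul_apply, Matrix.smul_apply, smul_eq_mul,
      smul_eq_mul, hR₁ i j, hR₂ i j]
    ring
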